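/- Let p be a prime and let G be a finite group of order p^n with n ≥ 2. Then G has an abelian section of size at least p^(n/log₂ n), i.e., there exist subgroups B ⊴ A ≤ G with A/B abelian and |A/B| ≥ p^(n/log₂ n). -/

import Mathlib

open Pointwise
open Subgroup hiding lowerCentralSeries lowerCentralSeries_one lowerCentralSeries_zero lowerCentralSeries_succ lowerCentralSeries_antitone nilpotent_iff_lowerCentralSeries
open scoped commutatorElement

section Helpers

variable {G : Type*} [Group G]


lemma stab_lcs (hnil : Group.IsNilpotent G) {i : ℕ}
    (h : Subgroup.lowerCentralSeries (⊤ : Subgroup G) (i+1) = Subgroup.lowerCentralSeries (⊤ : Subgroup G) i) :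
    Subgroup.lowerCentralSeries (⊤ : Subgroup G) i = ⊥ := by
  obtain ⟨k, hk⟩ := nilpotent_iff_lowerCentralSeries.mp hnil
  have hstep : ∀ j, i ≤ j → Subgroup.lowerCentralSeries (⊤ : Subgroup G) j = Subgroup.lowerCentralSeries (⊤ : Subgroup G) i := by
    intro j hj
    induction j with
    | zero => exact (Nat.le_zero.mp hj ▸ rfl)
    | succ m ih =>
      rcases Nat.lt_or_ge i (m+1) with h1 | h1
      · have hmi : i ≤ m := by omega
        have h2 := ih hmi
        show (⁅Subgroup.lowerCentralSeries (⊤ : Subgroup G) m, ⊤⁆ : Subgroup G) = _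
        rw [h2]; exact h
      · have : i = m + 1 := by omega
        rw [this]
  have h3 := hstep (max i k) (le_max_left _ _)
  rw [← h3]
  exact eq_bot_iff.mpr (hk ▸ lowerCentralSeries_antitone _ (le_max_right i k))

lemma rel3 (H₁ H₂ H₃ N : Subgroup G) [N.Normal]
    (h1 : ⁅⁅H₂, H₃⁆, H₁⁆ ≤ N) (h2 : ⁅⁅H₃, H₁⁆, H₂⁆ ≤ N) : ⁅⁅H₁, H₂⁆, H₃⁆ ≤ N := by
  let π := QuotientGroup.mk' N
  have hker : π.ker = N := QuotientGroup.ker_mk' N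
  have key : ∀ A B C : Subgroup G, ⁅⁅A, B⁆, C⁆ ≤ N ↔ ⁅⁅map π A, map π B⁆, map π C⁆ = ⊥ := by
    intro A B C
    rw [← map_commutator, ← map_commutator, Subgroup.map_eq_bot_iff, hker]
  rw [key]
  exact Subgroup.commutator_commutator_eq_bot_of_rotate ((key _ _ _).mp h1) ((key _ _ _).mp h2)

lemma comm_lcs : ∀ j i : ℕ, ⁅Subgroup.lowerCentralSeries (⊤ : Subgroup G) i, Subgroup.lowerCentralSeries (⊤ : Subgroup G) j⁆ ≤ Subgroup.lowerCentralSeries (⊤ : Subgroup G) (i + j + 1) := by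
  intro j
  induction j with
  | zero => intro i; exact le_of_eq rfl
  | succ m ih =>
    intro i
    have hg : Subgroup.lowerCentralSeries (⊤ : Subgroup G) (m+1) = ⁅Subgroup.lowerCentralSeries (⊤ : Subgroup G) m, ⊤⁆ := rfl
    rw [hg, Subgroup.commutator_comm]
    apply rel3
    · -- ⁅⁅⊤, lcs i⁆, lcs m⁆ ≤ lcs (i + (m+1) + 1)
      rw [Subgroup.commutator_comm (⊤ : Subgroup G)]
      show (⁅⁅Subgroup.lowerCentralSeries (⊤ : Subgroup G) i, ⊤⁆, Subgroup.lowerCentralSeries (⊤ : Subgroup G) m⁆ : Subgroup G) ≤ _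
      have : (⁅Subgroup.lowerCentralSeries (⊤ : Subgroup G) i, ⊤⁆ : Subgroup G) = Subgroup.lowerCentralSeries (⊤ : Subgroup G) (i+1) := rfl
      rw [this]
      have := ih (i+1)
      calc (⁅Subgroup.lowerCentralSeries (⊤ : Subgroup G) (i+1), Subgroup.lowerCentralSeries (⊤ : Subgroup G) m⁆ : Subgroup G)
          ≤ Subgroup.lowerCentralSeries (⊤ : Subgroup G) (i+1+m+1) := ih (i+1)
        _ ≤ Subgroup.lowerCentralSeries (⊤ : Subgroup G) (i+(m+1)+1) := le_of_eq (by ring_nf)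
    · -- ⁅⁅lcs i, lcs m⁆, ⊤⁆ ≤ lcs (i + (m+1) + 1)
      calc (⁅⁅Subgroup.lowerCentralSeries (⊤ : Subgroup G) i, Subgroup.lowerCentralSeries (⊤ : Subgroup G) m⁆, ⊤⁆ : Subgroup G)
          ≤ ⁅Subgroup.lowerCentralSeries (⊤ : Subgroup G) (i+m+1), ⊤⁆ := Subgroup.commutator_mono (ih i) le_rfl
        _ = Subgroup.lowerCentralSeries (⊤ : Subgroup G) (i+m+2) := rfl
        _ = Subgroup.lowerCentralSeries (⊤ : Subgroup G) (i+(m+1)+1) := by ring_nf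

/-- Burnside-type lemma: a finite nilpotent group whose commutator subgroup has index dividing
a prime is abelian (trivial commutator subgroup). -/
lemma burn [Finite G] (hnil : Group.IsNilpotent G) {p : ℕ} (hp : p.Prime)
    (hidx : (commutator G).index ∣ p) : commutator G = ⊥ := by
  have key : commutator G ≤ Subgroup.lowerCentralSeries (⊤ : Subgroup G) 2 := by
    rcases (Nat.dvd_prime hp).mp hidx with h1 | h1
    · have htop : commutator G = ⊤ := Subgroup.index_eq_one.mp h1
      have h2 : Subgroup.lowerCentralSeries (⊤ : Subgroup G) 2 = ⊤ := by
        show (⁅Subgroup.lowerCentralSeries (⊤ : Subgroup G) 1, ⊤⁆ : Subgroup G) = ⊤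
        rw [lowerCentralSeries_one, htop]; exact htop
      rw [h2]; exact le_top
    · have hne : commutator G ≠ ⊤ := by
        intro hc
        have := Subgroup.index_eq_one.mpr hc
        rw [h1] at this
        exact hp.one_lt.ne' this
      obtain ⟨x, hx⟩ : ∃ x, x ∉ commutator G := by
        by_contra hc; push_neg at hc
        exact hne ((Subgroup.eq_top_iff' _).mpr hc)
      have hJtop : Subgroup.closure {x} ⊔ commutator G = ⊤ := by
        have hKJ : commutator G ≤ Subgroup.closure {x} ⊔ commutator G := le_sup_right
        have hdvd : (Subgroup.closure {x} ⊔ commutator G).index ∣ p :=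
          h1 ▸ Subgroup.index_dvd_of_le hKJ
        rcases (Nat.dvd_prime hp).mp hdvd with h2 | h2
        · exact Subgroup.index_eq_one.mp h2
        · exfalso
          have hcards : Nat.card (Subgroup.closure {x} ⊔ commutator G : Subgroup G)
              = Nat.card (commutator G) := by
            have c1 := Subgroup.card_mul_index (G := G) (H := Subgroup.closure {x} ⊔ commutator G)
            have c2 := Subgroup.card_mul_index (G := G) (H := commutator G)
            rw [h2] at c1; rw [h1] at c2
            exact Nat.eq_of_mul_eq_mul_right hp.pos (c1.trans c2.symm)
          have heq : commutator G = Subgroup.closure {x} ⊔ commutator G :=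
            Subgroup.eq_of_le_of_card_ge hKJ (le_of_eq hcards)
          exact hx (heq ▸ Subgroup.mem_sup_left (Subgroup.subset_closure rfl))
      -- central images of the commutator subgroup in G ⧸ γ₂
      have hcen : ∀ u : G, u ∈ commutator G → ∀ q : G ⧸ Subgroup.lowerCentralSeries (⊤ : Subgroup G) 2,
          Commute ((u : G) : G ⧸ Subgroup.lowerCentralSeries (⊤ : Subgroup G) 2) q := by
        intro u hu q
        obtain ⟨g, rfl⟩ := QuotientGroup.mk_surjective q
        have hmem : (⁅u, g⁆ : G) ∈ Subgroup.lowerCentralSeries (⊤ : Subgroup G) 2 := by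
          show ⁅u, g⁆ ∈ (⁅Subgroup.lowerCentralSeries (⊤ : Subgroup G) 1, ⊤⁆ : Subgroup G)
          exact Subgroup.commutator_mem_commutator
            (by rw [lowerCentralSeries_one]; exact hu) (Subgroup.mem_top g)
        have h2 : ((⁅u, g⁆ : G) : G ⧸ Subgroup.lowerCentralSeries (⊤ : Subgroup G) 2) = 1 :=
          (QuotientGroup.eq_one_iff _).mpr hmem
        refine commutatorElement_eq_one_iff_commute.mp ?_
        exact h2
      -- now express any element via x-power times commutator-element
      rw [_root_.commutator_def]; nth_rw 1 2 [← hJtop]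
      rw [Subgroup.commutator_le]
      intro g hg h hh
      have hgm : g ∈ ((Subgroup.closure {x} : Subgroup G) : Set G) * ((commutator G : Subgroup G) : Set G) := by
        rw [← Subgroup.mul_normal]; exact_mod_cast hg
      have hhm : h ∈ ((Subgroup.closure {x} : Subgroup G) : Set G) * ((commutator G : Subgroup G) : Set G) := by
        rw [← Subgroup.mul_normal]; exact_mod_cast hh
      obtain ⟨a, ha, u, hu, rfl⟩ := hgm
      obtain ⟨b, hb, v, hv, rfl⟩ := hhm
      obtain ⟨za, rfl⟩ := Subgroup.mem_closure_singleton.mp ha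
      obtain ⟨zb, rfl⟩ := Subgroup.mem_closure_singleton.mp hb
      have hc1 : Commute (((x : G) : G ⧸ Subgroup.lowerCentralSeries (⊤ : Subgroup G) 2)^za)
          (((x : G) : G ⧸ Subgroup.lowerCentralSeries (⊤ : Subgroup G) 2)^zb) := (Commute.refl _).zpow_zpow za zb
      have e1 : ((x ^ za * u : G) : G ⧸ Subgroup.lowerCentralSeries (⊤ : Subgroup G) 2)
          = ((x : G) : G ⧸ Subgroup.lowerCentralSeries (⊤ : Subgroup G) 2)^za * (u : G ⧸ Subgroup.lowerCentralSeries (⊤ : Subgroup G) 2) := by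
        rfl
      have e2 : ((x ^ zb * v : G) : G ⧸ Subgroup.lowerCentralSeries (⊤ : Subgroup G) 2)
          = ((x : G) : G ⧸ Subgroup.lowerCentralSeries (⊤ : Subgroup G) 2)^zb * (v : G ⧸ Subgroup.lowerCentralSeries (⊤ : Subgroup G) 2) := by
        rfl
      have hcom : Commute ((x ^ za * u : G) : G ⧸ Subgroup.lowerCentralSeries (⊤ : Subgroup G) 2)
          ((x ^ zb * v : G) : G ⧸ Subgroup.lowerCentralSeries (⊤ : Subgroup G) 2) := by
        rw [e1, e2]
        exact Commute.mul_left (Commute.mul_right hc1 ((hcen v hv _).symm)) (hcen u hu _)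
      show ⁅x ^ za * u, x ^ zb * v⁆ ∈ Subgroup.lowerCentralSeries (⊤ : Subgroup G) 2
      refine (QuotientGroup.eq_one_iff _).mp ?_
      have hfin := commutatorElement_eq_one_iff_commute.mpr hcom
      exact hfin
  have h21 : Subgroup.lowerCentralSeries (⊤ : Subgroup G) 2 = Subgroup.lowerCentralSeries (⊤ : Subgroup G) 1 :=
    le_antisymm (lowerCentralSeries_antitone _ (by norm_num))
      (by rw [lowerCentralSeries_one]; exact key)
  rw [← lowerCentralSeries_one (G := G)]
  exact stab_lcs hnil h21


/-- If `K ≤ H` with `⁅H,K⁆ = ⊥`, `|H| = p³`, `|K| = p²`, then `H` is abelian. -/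
lemma lemX [Finite G] {p : ℕ} (hp : p.Prime) {H K : Subgroup G} (hKH : K ≤ H)
    (hH : Nat.card H = p ^ 3) (hK : Nat.card K = p ^ 2) (hcomm : ⁅H, K⁆ = ⊥) :
    ⁅H, H⁆ = ⊥ := by
  have hcent : ∀ x ∈ H, ∀ y ∈ H, Commute x y := by
    intro x hx y hy
    by_cases hxK : x ∈ K
    · have : ⁅y, x⁆ ∈ (⊥ : Subgroup G) := hcomm ▸ Subgroup.commutator_mem_commutator hy hxK
      exact (commutatorElement_eq_one_iff_commute.mp (Subgroup.mem_bot.mp this)).symm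
    · -- J = ⟨x⟩ ⊔ K equals H
      set J := Subgroup.closure {x} ⊔ K with hJdef
      have hxJ : x ∈ J := Subgroup.mem_sup_left (Subgroup.subset_closure rfl)
      have hKJ : K ≤ J := le_sup_right
      have hJH : J ≤ H := sup_le ((Subgroup.closure_le H).mpr (by simpa using hx)) hKH
      obtain ⟨j, hj3, hcardJ⟩ := (Nat.dvd_prime_pow hp).mp (hH ▸ Subgroup.card_dvd_of_le hJH)
      have h2j : 2 ≤ j := by
        have : p ^ 2 ∣ p ^ j := by
          rw [← hK, ← hcardJ]; exact Subgroup.card_dvd_of_le hKJ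
        exact (Nat.pow_dvd_pow_iff_le_right hp.one_lt).mp this
      have hj : j = 3 := by
        rcases Nat.lt_or_ge j 3 with h3 | h3
        · exfalso
          have hje : j = 2 := by omega
          have : K = J := Subgroup.eq_of_le_of_card_ge hKJ (by rw [hcardJ, hK, hje])
          exact hxK (this ▸ hxJ)
        · omega
      have hJeq : J = H := by
        have : Nat.card J = Nat.card H := by rw [hcardJ, hH, hj]
        rcases lt_or_eq_of_le hJH with hlt | heq
        · exact Subgroup.eq_of_le_of_card_ge hJH (le_of_eq this.symm)
        · exact heq
      -- H ≤ centralizer {x}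
      have hcen : H ≤ Subgroup.centralizer {x} := by
        rw [← hJeq]
        apply sup_le
        · rw [Subgroup.closure_le]
          intro z hz
          rw [Set.mem_singleton_iff] at hz
          subst hz
          exact Subgroup.mem_centralizer_iff.mpr (by simp)
        · intro k hk
          refine Subgroup.mem_centralizer_iff.mpr ?_
          intro z hz
          rw [Set.mem_singleton_iff] at hz; subst hz
          have : ⁅z, k⁆ ∈ (⊥ : Subgroup G) := hcomm ▸ Subgroup.commutator_mem_commutator hx hk
          exact (commutatorElement_eq_one_iff_commute.mp (Subgroup.mem_bot.mp this)).eq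
      exact Subgroup.mem_centralizer_iff.mp (hcen hy) x rfl
  rw [eq_bot_iff, Subgroup.commutator_le]
  intro g1 h1 g2 h2
  exact Subgroup.mem_bot.mpr (commutatorElement_eq_one_iff_commute.mpr (hcent g1 h1 g2 h2))

/-- `2^n ≤ n^m` implies `n / log₂ n ≤ m`. -/
lemma exp_ok {n m : ℕ} (hn : 2 ≤ n) (h : (2:ℝ) ^ (n:ℕ) ≤ (n:ℝ) ^ (m:ℕ)) :
    (n:ℝ) / Real.logb 2 n ≤ (m:ℕ) := by
  have hn1 : (1:ℝ) < (n:ℝ) := by exact_mod_cast hn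
  have hlog2 : (0:ℝ) < Real.log 2 := Real.log_pos (by norm_num)
  have hlogn : (0:ℝ) < Real.log n := Real.log_pos hn1
  have hL : (0:ℝ) < Real.logb 2 n := Real.logb_pos (by norm_num) hn1
  rw [div_le_iff₀ hL]
  have hlog := Real.log_le_log (by positivity) h
  rw [Real.log_pow, Real.log_pow] at hlog
  rw [Real.logb, ← mul_div_assoc, le_div_iff₀ hlog2]
  exact hlog

/-- Package an abelian section `A/N` as required by the main theorem. -/
lemma sec_card [Finite G] (A N : Subgroup G) (hN : N.Normal) (hle : N ≤ A)
    (hc : ⁅A, A⁆ ≤ N) :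
    ∃ B : Subgroup ↥A, B.Normal ∧ commutator ↥A ≤ B ∧
      Nat.card (↥A ⧸ B) * Nat.card N = Nat.card A := by
  haveI := hN
  refine ⟨N.subgroupOf A, inferInstance, ?_, ?_⟩
  · rw [_root_.commutator_def, Subgroup.subgroupOf]
    rw [← Subgroup.map_le_iff_le_comap, Subgroup.map_commutator]
    have htop : Subgroup.map A.subtype ⊤ = A := by
      rw [← MonoidHom.range_eq_map, A.range_subtype]
    rw [htop]
    exact hc
  · have h1 := Subgroup.card_eq_card_quotient_mul_card_subgroup (N.subgroupOf A)
    have h2 : Nat.card (N.subgroupOf A) = Nat.card N :=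
      Nat.card_congr (Subgroup.subgroupOfEquivOfLe hle).toEquiv
    rw [h2] at h1
    exact h1.symm

end Helpers


/-- Let `p` be a prime and `G` a finite group of order `p ^ n` with `n ≥ 2`.  Then `G`
has an abelian section of size at least `p ^ (n / log₂ n)`. -/
theorem pGroup_exists_large_abelian_section {G : Type*} [Group G] [Fintype G]
    (p n : ℕ) (hp : p.Prime) (hn : 2 ≤ n) (hcard : Nat.card G = p ^ n) :
    ∃ (A : Subgroup G) (B : Subgroup A), B.Normal ∧ commutator ↥A ≤ B ∧
      (Nat.card (↥A ⧸ B) : ℝ) ≥ (p : ℝ) ^ ((n : ℝ) / Real.logb 2 n) := by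
  haveI := Fact.mk hp
  have hpg : IsPGroup p G := IsPGroup.of_card hcard
  have hnil : Group.IsNilpotent G := hpg.isNilpotent
  by_contra hcon
  push_neg at hcon
  -- exponent function for the lower central series
  have hdvd : ∀ i, Nat.card (Subgroup.lowerCentralSeries (⊤ : Subgroup G) i) ∣ p ^ n := fun i =>
    hcard ▸ Subgroup.card_subgroup_dvd_card _
  choose e he hecard using fun i => (Nat.dvd_prime_pow hp).mp (hdvd i)
  have hp1 : (1:ℝ) < (p:ℝ) := by exact_mod_cast hp.one_lt
  have hppos : 0 < p := hp.pos
  have emono : ∀ {i j : ℕ}, i ≤ j → e j ≤ e i := by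
    intro i j hij
    have h1 : Nat.card (Subgroup.lowerCentralSeries (⊤ : Subgroup G) j) ∣ Nat.card (Subgroup.lowerCentralSeries (⊤ : Subgroup G) i) :=
      Subgroup.card_dvd_of_le (lowerCentralSeries_antitone _ hij)
    rw [hecard i, hecard j] at h1
    exact (Nat.pow_dvd_pow_iff_le_right hp.one_lt).mp h1
  have e0 : e 0 = n := by
    have h1 : Nat.card (Subgroup.lowerCentralSeries (⊤ : Subgroup G) 0) = p ^ n := by
      rw [lowerCentralSeries_zero, Subgroup.card_top, hcard]
    rw [hecard 0] at h1
    exact Nat.pow_right_injective hp.two_le h1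
  have ezero : ∀ i, e i = 0 ↔ Subgroup.lowerCentralSeries (⊤ : Subgroup G) i = ⊥ := by
    intro i
    constructor
    · intro h0
      refine Subgroup.card_eq_one.mp ?_
      rw [hecard i, h0, pow_zero]
    · intro hb
      have : Nat.card (Subgroup.lowerCentralSeries (⊤ : Subgroup G) i) = 1 := Subgroup.card_eq_one.mpr hb
      rw [hecard i] at this
      by_contra h0
      have h2 : 1 < p ^ e i := Nat.one_lt_pow h0 hp.one_lt
      omega
  -- the key candidate bound coming from the negated goal
  have hcand : ∀ i j : ℕ, i ≤ j →
      (⁅Subgroup.lowerCentralSeries (⊤ : Subgroup G) i, Subgroup.lowerCentralSeries (⊤ : Subgroup G) i⁆ ≤ Subgroup.lowerCentralSeries (⊤ : Subgroup G) j) →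
      ((e i - e j : ℕ) : ℝ) < (n:ℝ) / Real.logb 2 n := by
    intro i j hij habel
    obtain ⟨B, hBn, hBc, hBcard⟩ := sec_card (Subgroup.lowerCentralSeries (⊤ : Subgroup G) i) (Subgroup.lowerCentralSeries (⊤ : Subgroup G) j)
      inferInstance (lowerCentralSeries_antitone _ hij) habel
    have hji : e j ≤ e i := emono hij
    have hq : Nat.card (↥(Subgroup.lowerCentralSeries (⊤ : Subgroup G) i) ⧸ B) = p ^ (e i - e j) := by
      have h1 : p ^ (e i - e j) * p ^ (e j) = p ^ (e i) := by
        rw [← pow_add]; congr 1; omega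
      rw [hecard i, hecard j] at hBcard
      refine Nat.eq_of_mul_eq_mul_right (pow_pos hppos (e j)) ?_
      rw [hBcard, h1]
    have hlt := hcon (Subgroup.lowerCentralSeries (⊤ : Subgroup G) i) B hBn hBc
    rw [hq] at hlt
    have hlt2 : ((p:ℝ)) ^ ((e i - e j : ℕ) : ℝ) < (p:ℝ) ^ ((n:ℝ) / Real.logb 2 n) := by
      rw [Real.rpow_natCast]
      exact_mod_cast hlt
    exact (Real.rpow_lt_rpow_left_iff hp1).mp hlt2
  -- windows
  have hwin : ∀ i : ℕ, ((e i - e (2*i+1) : ℕ) : ℝ) < (n:ℝ) / Real.logb 2 n := by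
    intro i
    refine hcand i (2*i+1) (by omega) ?_
    have := comm_lcs (G := G) i i
    have h2 : i + i + 1 = 2*i+1 := by ring
    rw [h2] at this
    exact this
  -- descent
  have hdesc : ∀ i, e (i+1) < e i ∨ (e i = 0 ∧ e (i+1) = 0) := by
    intro i
    by_cases hstep : Subgroup.lowerCentralSeries (⊤ : Subgroup G) (i+1) = Subgroup.lowerCentralSeries (⊤ : Subgroup G) i
    · right
      have hbot := stab_lcs hnil hstep
      have h1 : e i = 0 := (ezero i).mpr hbot
      have h2 : e (i+1) = 0 := (ezero (i+1)).mpr (hstep.trans hbot)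
      exact ⟨h1, h2⟩
    · left
      have hle : e (i+1) ≤ e i := emono (by omega)
      rcases lt_or_eq_of_le hle with h1 | h1
      · exact h1
      · exfalso
        apply hstep
        refine Subgroup.eq_of_le_of_card_ge (lowerCentralSeries_antitone _ (by omega)) ?_
        rw [hecard i, hecard (i+1), h1]
  -- burn: small abelianization forces abelian
  have hburn : e 1 = 0 ∨ 2 ≤ n - e 1 := by
    by_cases hb : n - e 1 ≤ 1
    · left
      have he1n : e 1 ≤ n := e0 ▸ emono (by omega)
      have hidx : (commutator G).index ∣ p := by
        have hc1 := Subgroup.card_mul_index (G := G) (H := commutator G)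
        rw [← lowerCentralSeries_one, hecard 1, hcard] at hc1
        have : (Subgroup.lowerCentralSeries (⊤ : Subgroup G) 1).index = p ^ (n - e 1) := by
          refine Nat.eq_of_mul_eq_mul_left (pow_pos hppos (e 1)) ?_
          rw [hc1, ← pow_add]
          congr 1; omega
        rw [← lowerCentralSeries_one, this]
        interval_cases h : (n - e 1)
        · simpa using one_dvd p
        · simp
      have := burn hnil hp hidx
      rw [← lowerCentralSeries_one] at this
      exact (ezero 1).mpr this
    · right; omega
  -- existence of vanishing points
  obtain ⟨k0, hk0⟩ := nilpotent_iff_lowerCentralSeries.mp hnil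
  have hex : ∃ j, e j = 0 := ⟨k0, (ezero k0).mpr hk0⟩
  rcases Nat.lt_or_ge n 16 with hsmall | hbig
  · -- small case
    have hwnat : ∀ (M : ℕ), ((2:ℝ)^(n:ℕ) ≤ (n:ℝ)^(M+1:ℕ)) → ∀ i, e i - e (2*i+1) ≤ M := by
      intro M hM i
      have h1 := hwin i
      have h2 := exp_ok hn hM
      have h3 : ((e i - e (2*i+1) : ℕ):ℝ) < (((M+1:ℕ)):ℝ) := lt_of_lt_of_le h1 h2
      have h4 : e i - e (2*i+1) < M + 1 := by exact_mod_cast h3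
      omega
    have d0 := hdesc 0
    have d1 := hdesc 1
    have d2 := hdesc 2
    have d3 := hdesc 3
    have d4 := hdesc 4
    have d5 := hdesc 5
    have d6 := hdesc 6
    have d7 := hdesc 7
    have d8 := hdesc 8
    have d9 := hdesc 9
    have d10 := hdesc 10
    have d11 := hdesc 11
    have d12 := hdesc 12
    have d13 := hdesc 13
    have d14 := hdesc 14
    have d15 := hdesc 15
    have d16 := hdesc 16
    have d17 := hdesc 17
    have d18 := hdesc 18
    have d19 := hdesc 19
    have d20 := hdesc 20
    have d21 := hdesc 21
    have d22 := hdesc 22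
    have d23 := hdesc 23
    have d24 := hdesc 24
    have d25 := hdesc 25
    have d26 := hdesc 26
    have d27 := hdesc 27
    have d28 := hdesc 28
    norm_num at d0 d1 d2 d3 d4 d5 d6 d7 d8 d9 d10 d11 d12 d13 d14 d15 d16 d17 d18 d19 d20 d21 d22 d23 d24 d25 d26 d27 d28
    rcases (by omega : (2 ≤ n ∧ n ≤ 4) ∨ (5 ≤ n ∧ n ≤ 9) ∨ (10 ≤ n ∧ n ≤ 15)) with
      ⟨ha1, ha2⟩ | ⟨ha1, ha2⟩ | ⟨ha1, ha2⟩
    · have hw := hwnat 1 (by interval_cases n <;> norm_num)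
      have w0 := hw 0
      have w1 := hw 1
      have w2 := hw 2
      have w3 := hw 3
      have w4 := hw 4
      have w5 := hw 5
      have w6 := hw 6
      have w7 := hw 7
      have w8 := hw 8
      have w9 := hw 9
      have w10 := hw 10
      have w11 := hw 11
      have w12 := hw 12
      have w13 := hw 13
      have w14 := hw 14
      norm_num at w0 w1 w2 w3 w4 w5 w6 w7 w8 w9 w10 w11 w12 w13 w14
      rcases hburn with hb | hb <;> omega
    · have hw := hwnat 2 (by interval_cases n <;> norm_num)
      have w0 := hw 0
      have w1 := hw 1
      have w2 := hw 2
      have w3 := hw 3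
      have w4 := hw 4
      have w5 := hw 5
      have w6 := hw 6
      have w7 := hw 7
      have w8 := hw 8
      have w9 := hw 9
      have w10 := hw 10
      have w11 := hw 11
      have w12 := hw 12
      have w13 := hw 13
      have w14 := hw 14
      norm_num at w0 w1 w2 w3 w4 w5 w6 w7 w8 w9 w10 w11 w12 w13 w14
      rcases hburn with hb | hb
      · omega
      · by_cases hn5 : n = 5
        · subst hn5
          have he1 : e 1 = 3 := by omega
          have he2 : e 2 = 2 := by omega
          have he4 : e 4 = 0 := by omega
          have hbot4 : Subgroup.lowerCentralSeries (⊤ : Subgroup G) 4 = ⊥ := (ezero 4).mp he4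
          have hc12 : ⁅Subgroup.lowerCentralSeries (⊤ : Subgroup G) 1, Subgroup.lowerCentralSeries (⊤ : Subgroup G) 2⁆ = ⊥ := by
            have hcc := comm_lcs (G := G) 2 1
            rw [show (1+2+1 : ℕ) = 4 from rfl, hbot4] at hcc
            exact le_bot_iff.mp hcc
          have habel : ⁅Subgroup.lowerCentralSeries (⊤ : Subgroup G) 1, Subgroup.lowerCentralSeries (⊤ : Subgroup G) 1⁆ = ⊥ :=
            lemX hp (lowerCentralSeries_antitone _ (by omega))
              (by rw [hecard 1, he1]) (by rw [hecard 2, he2]) hc12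
          have hfin := hcand 1 4 (by omega) (by rw [habel]; exact bot_le)
          rw [he1, he4] at hfin
          have h2 := exp_ok (n := 5) (m := 3) (by norm_num) (by norm_num)
          have h3 : (((3:ℕ)):ℝ) < ((3:ℕ):ℝ) := by
            calc (((3:ℕ)):ℝ) = ((3 - 0 : ℕ):ℝ) := by norm_num
            _ < (5:ℝ) / Real.logb 2 5 := by exact_mod_cast hfin
            _ ≤ ((3:ℕ):ℝ) := by exact_mod_cast h2
          exact absurd h3 (lt_irrefl _)
        · omega
    · have hw := hwnat 3 (by interval_cases n <;> norm_num)
      have w0 := hw 0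
      have w1 := hw 1
      have w2 := hw 2
      have w3 := hw 3
      have w4 := hw 4
      have w5 := hw 5
      have w6 := hw 6
      have w7 := hw 7
      have w8 := hw 8
      have w9 := hw 9
      have w10 := hw 10
      have w11 := hw 11
      have w12 := hw 12
      have w13 := hw 13
      have w14 := hw 14
      norm_num at w0 w1 w2 w3 w4 w5 w6 w7 w8 w9 w10 w11 w12 w13 w14
      rcases hburn with hb | hb <;> omega
  · -- big case
    set L := Real.logb 2 n with hLdef
    have hnposR : (0:ℝ) < (n:ℝ) := by positivity
    have hLpos : (0:ℝ) < L := Real.logb_pos (by norm_num) (by exact_mod_cast (by omega : 1 < n))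
    have hL4 : (4:ℝ) ≤ L := by
      by_contra hc
      push_neg at hc
      have h1 : (2:ℝ) ^ L < (2:ℝ) ^ (4:ℝ) := (Real.rpow_lt_rpow_left_iff (by norm_num)).mpr hc
      have h2 : (2:ℝ) ^ L = n := Real.rpow_logb (by norm_num) (by norm_num) hnposR
      have h3 : (2:ℝ) ^ (4:ℝ) = 16 := by
        rw [show ((4:ℝ)) = ((4:ℕ):ℝ) by norm_num, Real.rpow_natCast]; norm_num
      rw [h2, h3] at h1
      have : (16:ℝ) ≤ n := by exact_mod_cast hbig
      linarith
    have hex2 : ∃ t, e (2^t - 1) = 0 := by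
      obtain ⟨j, hj⟩ := hex
      refine ⟨j, ?_⟩
      have h1 : j ≤ 2^j - 1 := by have := Nat.lt_two_pow_self (n := j); omega
      have := emono h1; omega
    set C := Nat.find hex with hCdef
    have eC : e C = 0 := Nat.find_spec hex
    have Cmin : ∀ j, j < C → e j ≠ 0 := fun j hj => Nat.find_min hex hj
    set k := Nat.find hex2 with hkdef
    have hk : e (2^k - 1) = 0 := Nat.find_spec hex2
    have kmin : ∀ t, t < k → e (2^t - 1) ≠ 0 := fun t ht => Nat.find_min hex2 ht
    have hk1 : 1 ≤ k := by
      by_contra hc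
      have hk0 : k = 0 := by omega
      rw [hk0] at hk
      simp at hk
      rw [e0] at hk
      omega
    -- telescoping
    set W := Finset.sup (Finset.range k) (fun t => e (2^t - 1) - e (2^(t+1) - 1)) with hWdef
    have htel : ∀ t, t ≤ k → e 0 ≤ t * W + e (2^t - 1) := by
      intro t
      induction t with
      | zero => intro _; simp
      | succ m ih =>
        intro hm
        have h1 := ih (by omega)
        have hsup : e (2^m - 1) - e (2^(m+1) - 1) ≤ W :=
          Finset.le_sup (f := fun t => e (2^t - 1) - e (2^(t+1) - 1))
            (Finset.mem_range.mpr (by omega))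
        have hmm : e (2^(m+1) - 1) ≤ e (2^m - 1) := by
          refine emono ?_
          have h2 : (1:ℕ) ≤ 2^m := Nat.one_le_two_pow
          have h3 : (2:ℕ)^(m+1) = 2 * 2^m := by rw [pow_succ]; ring
          omega
        have h4 : (m+1) * W = m * W + W := by ring
        omega
    have hnkW : n ≤ k * W := by
      have h1 := htel k le_rfl
      rw [e0, hk] at h1
      omega
    obtain ⟨t0, ht0, hWt0⟩ := Finset.exists_mem_eq_sup (Finset.range k)
      ⟨0, Finset.mem_range.mpr (by omega)⟩ (fun t => e (2^t - 1) - e (2^(t+1) - 1))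
    have hWT : (W:ℝ) < (n:ℝ) / L := by
      have h1 := hwin (2^t0 - 1)
      have hidx : 2*(2^t0 - 1)+1 = 2^(t0+1) - 1 := by
        have h2 : (1:ℕ) ≤ 2^t0 := Nat.one_le_two_pow
        have h3 : (2:ℕ)^(t0+1) = 2 * 2^t0 := by rw [pow_succ]; ring
        omega
      rw [hidx] at h1
      rw [hWdef, hWt0]
      exact h1
    -- L < k
    have hkL : L < (k:ℝ) := by
      have hkpos : (0:ℝ) < (k:ℝ) := by exact_mod_cast (by omega : 0 < k)
      have h1 : (n:ℝ) ≤ (k:ℝ) * (W:ℝ) := by exact_mod_cast hnkW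
      have h2 : (k:ℝ) * (W:ℝ) < (k:ℝ) * ((n:ℝ)/L) := by
        exact mul_lt_mul_of_pos_left hWT hkpos
      have h3 : (n:ℝ) < (k:ℝ) * ((n:ℝ)/L) := lt_of_le_of_lt h1 h2
      have h5 : (k:ℝ)*((n:ℝ)/L)*L = (k:ℝ)*(n:ℝ) := by field_simp
      nlinarith [mul_lt_mul_of_pos_right h3 hLpos]
    -- abelian subgroup candidate
    have hCpos : 0 < C := by
      by_contra hc
      have hC0 : C = 0 := by omega
      rw [hC0, e0] at eC
      omega
    have heCj : ∀ m j, j + m = C → m ≤ e j := by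
      intro m
      induction m with
      | zero => intro j hj; omega
      | succ mm ih =>
        intro j hj
        have hjC : j < C := by omega
        have hne := Cmin j hjC
        rcases hdesc j with h1 | h1
        · have := ih (j+1) (by omega)
          omega
        · omega
    have hmid : C - C/2 ≤ e (C/2) := heCj (C - C/2) (C/2) (by omega)
    have hz : e (2*(C/2)+1) = 0 := by
      have h1 : C ≤ 2*(C/2)+1 := by omega
      have := emono h1
      omega
    have hV2 : ((e (C/2)):ℝ) < (n:ℝ) / L := by
      have h1 := hwin (C/2)
      rw [hz] at h1
      simpa using h1
    -- C ≥ 2^(k-1)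
    have hCk : 2^(k-1) ≤ C := by
      have h1 := kmin (k-1) (by omega)
      by_contra hc
      push_neg at hc
      have h2 : (1:ℕ) ≤ 2^(k-1) := Nat.one_le_two_pow
      have h3 : C ≤ 2^(k-1) - 1 := by omega
      have h4 := emono h3
      omega
    -- conclude
    have h2k : 2^k ≤ 4 * e (C/2) := by
      have h1 : (2:ℕ)^k = 2 * 2^(k-1) := by
        rw [← pow_succ']
        congr 1
        omega
      omega
    have hfin1 : (n:ℝ) < (2:ℝ)^(k:ℕ) := by
      have h1 : (2:ℝ)^L < (2:ℝ)^((k:ℕ):ℝ) := (Real.rpow_lt_rpow_left_iff (by norm_num)).mpr hkL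
      have h2 : (2:ℝ)^L = n := Real.rpow_logb (by norm_num) (by norm_num) hnposR
      rw [h2, Real.rpow_natCast] at h1
      exact h1
    have hfin2 : ((2:ℕ)^k : ℝ) ≤ 4 * ((e (C/2)):ℝ) := by exact_mod_cast h2k
    have hfin3 : ((e (C/2)):ℝ) < (n:ℝ)/4 := by
      have h1 : (n:ℝ)/L ≤ (n:ℝ)/4 := by
        apply div_le_div_of_nonneg_left (le_of_lt hnposR) (by norm_num) hL4
      linarith
    push_cast at hfin2
    linarith
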